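/- Let h : ℝ^d → ℝ ∪ {+∞} be a proper, lower semicontinuous, convex function with h(0) = 0. Then the closure of epi(h⁺) equals epi(h^π). If, in addition, the epigraph epi(h) = {(t, x) ∈ ℝ × ℝ^d : h(x) ≤ t} contains no line, then epi(h^π) is a pointed cone, i.e., if both v and −v belong to epi(h^π) then v = 0. -/

import Mathlib

open scoped Classical

/-- The perspective function `h⁺` of a function `h : ℝ^d → ℝ ∪ {+∞}`. -/
noncomputable def persp {d : ℕ} (h : (Fin d → ℝ) → EReal) (x : Fin d → ℝ) (w : ℝ) : EReal :=
  if 0 < w then (w : EReal) * h (w⁻¹ • x)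
  else if w = 0 ∧ x = 0 then 0
  else ⊤

/-- The closure `h^π` of the perspective function: at `w = 0` it is the limit
`lim_{s ↓ 0} s · h(x / s)`. -/
noncomputable def perspCl {d : ℕ} (h : (Fin d → ℝ) → EReal) (x : Fin d → ℝ) (w : ℝ) : EReal :=
  if 0 < w then (w : EReal) * h (w⁻¹ • x)
  else if w = 0 then
    Filter.limUnder (nhdsWithin (0 : ℝ) (Set.Ioi 0)) (fun s : ℝ => (s : EReal) * h (s⁻¹ • x))
  else ⊤

/-- The epigraph of the perspective function, a subset of `ℝ × ℝ^d × [0, ∞)`. -/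
def epiPersp {d : ℕ} (h : (Fin d → ℝ) → EReal) : Set (ℝ × (Fin d → ℝ) × ℝ) :=
  {p | 0 ≤ p.2.2 ∧ persp h p.2.1 p.2.2 ≤ (p.1 : EReal)}

/-- The epigraph of the closure of the perspective function. -/
def epiPerspCl {d : ℕ} (h : (Fin d → ℝ) → EReal) : Set (ℝ × (Fin d → ℝ) × ℝ) :=
  {p | 0 ≤ p.2.2 ∧ perspCl h p.2.1 p.2.2 ≤ (p.1 : EReal)}

section Aux

variable {d : ℕ} {h : (Fin d → ℝ) → EReal}

/-- Multiplying by a positive real in `EReal`. -/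
lemma aux_mul_le_iff {w t : ℝ} (hw : 0 < w) (a : EReal) :
    (w : EReal) * a ≤ (t : EReal) ↔ a ≤ ((w⁻¹ * t : ℝ) : EReal) := by
  have h1 : ((w⁻¹ * t : ℝ) : EReal) = (t : EReal) / (w : EReal) := by
    rw [← EReal.coe_div]; congr 1; field_simp
  rw [h1, EReal.le_div_iff_mul_le (by exact_mod_cast hw) (by simp), mul_comm]

/-- The epigraph of a lower semicontinuous function is closed. -/
lemma aux_isClosed_epi (h : (Fin d → ℝ) → EReal) (hlsc : LowerSemicontinuous h) :
    IsClosed {p : ℝ × (Fin d → ℝ) | h p.2 ≤ (p.1 : EReal)} := by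
  apply IsSeqClosed.isClosed
  intro u p hu hup
  by_contra hc
  simp only [Set.mem_setOf_eq, not_le] at hc
  obtain ⟨y, hy1, hy2⟩ := exists_between hc
  have h2 : Filter.Tendsto (fun n => (u n).2) Filter.atTop (nhds p.2) :=
    (continuous_snd.tendsto p).comp hup
  have h3 : ∀ᶠ n in Filter.atTop, y < h ((u n).2) := h2.eventually (hlsc p.2 y hy2)
  have h4 : ∀ᶠ n in Filter.atTop, y ≤ (((u n).1 : ℝ) : EReal) := by
    filter_upwards [h3] with n hn
    exact le_trans hn.le (hu n)
  have h5 : Filter.Tendsto (fun n => (((u n).1 : ℝ) : EReal)) Filter.atTop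
      (nhds ((p.1 : ℝ) : EReal)) :=
    (continuous_coe_real_ereal.tendsto p.1).comp ((continuous_fst.tendsto p).comp hup)
  exact absurd (ge_of_tendsto h5 h4) (not_le.mpr hy1)

/-- The function `s ↦ s · h(x/s)` is antitone on `(0, ∞)`. -/
lemma aux_antitone
    (hbot : ∀ x, h x ≠ ⊥)
    (hconv : Convex ℝ {p : ℝ × (Fin d → ℝ) | h p.2 ≤ (p.1 : EReal)})
    (h0 : h 0 = 0) (x : Fin d → ℝ) :
    AntitoneOn (fun s : ℝ => (s : EReal) * h (s⁻¹ • x)) (Set.Ioi 0) := by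
  intro s hs s' hs' hss'
  simp only [Set.mem_Ioi] at hs hs'
  by_cases htop : h (s⁻¹ • x) = ⊤
  · simp only [htop, EReal.coe_mul_top_of_pos hs, le_top]
  · set α : ℝ := (h (s⁻¹ • x)).toReal with hα
    have hcoe : ((α : ℝ) : EReal) = h (s⁻¹ • x) := EReal.coe_toReal htop (hbot _)
    set a : ℝ := s / s' with ha
    have ha0 : 0 ≤ a := le_of_lt (div_pos hs hs')
    have ha1 : a ≤ 1 := (div_le_one hs').mpr hss'
    have hmem : (α, s⁻¹ • x) ∈ {p : ℝ × (Fin d → ℝ) | h p.2 ≤ (p.1 : EReal)} := by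
      simp only [Set.mem_setOf_eq, hcoe, le_refl]
    have hmem0 : ((0 : ℝ), (0 : Fin d → ℝ)) ∈
        {p : ℝ × (Fin d → ℝ) | h p.2 ≤ (p.1 : EReal)} := by
      simp only [Set.mem_setOf_eq, h0, EReal.coe_zero, le_refl]
    have hcomb := hconv (a := a) (b := 1 - a) hmem hmem0 ha0 (by linarith) (by ring)
    simp only [Prod.smul_mk, smul_eq_mul, mul_zero, smul_zero, Prod.mk_add_mk, add_zero,
      Set.mem_setOf_eq] at hcomb
    have hsmul : a • s⁻¹ • x = s'⁻¹ • x := by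
      rw [smul_smul]; congr 1; rw [ha]; field_simp
    rw [hsmul] at hcomb
    have key : (s' : EReal) * h (s'⁻¹ • x) ≤ ((s * α : ℝ) : EReal) := by
      rw [aux_mul_le_iff hs']
      refine le_trans hcomb ?_
      rw [EReal.coe_le_coe_iff]
      have heq : s'⁻¹ * (s * α) = a * α := by rw [ha]; field_simp
      rw [heq]
    calc (s' : EReal) * h (s'⁻¹ • x) ≤ ((s * α : ℝ) : EReal) := key
      _ = (s : EReal) * h (s⁻¹ • x) := by rw [EReal.coe_mul, hcoe]

/-- Value of the closure of the perspective at `w = 0`. -/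
lemma aux_perspCl_zero (x : Fin d → ℝ)
    (hanti : AntitoneOn (fun s : ℝ => (s : EReal) * h (s⁻¹ • x)) (Set.Ioi 0)) :
    perspCl h x 0 = sSup ((fun s : ℝ => (s : EReal) * h (s⁻¹ • x)) '' Set.Ioi 0) := by
  rw [perspCl, if_neg (lt_irrefl 0), if_pos rfl]
  exact Filter.Tendsto.limUnder_eq (hanti.tendsto_nhdsGT (OrderTop.bddAbove _))

end Aux

/-- If `h : ℝ^d → ℝ ∪ {+∞}` is proper, lower semicontinuous and convex with `h 0 = 0`,
then `cl (epi h⁺) = epi h^π`; if moreover `epi h` contains no line, then `epi h^π`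
is pointed. -/
theorem closure_epiPersp_eq_and_pointed {d : ℕ} (h : (Fin d → ℝ) → EReal)
    (hbot : ∀ x, h x ≠ ⊥) (hnetop : ∃ x, h x ≠ ⊤)
    (hlsc : LowerSemicontinuous h)
    (hconv : Convex ℝ {p : ℝ × (Fin d → ℝ) | h p.2 ≤ (p.1 : EReal)})
    (h0 : h 0 = 0) :
    closure (epiPersp h) = epiPerspCl h ∧
      ((¬ ∃ (p v : ℝ × (Fin d → ℝ)), v ≠ 0 ∧
          ∀ t : ℝ, p + t • v ∈ {q : ℝ × (Fin d → ℝ) | h q.2 ≤ (q.1 : EReal)}) →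
        ∀ v ∈ epiPerspCl h, -v ∈ epiPerspCl h → v = 0) := by
  have hEc : IsClosed {p : ℝ × (Fin d → ℝ) | h p.2 ≤ (p.1 : EReal)} :=
    aux_isClosed_epi h hlsc
  have hle : ∀ (x : Fin d → ℝ) (t : ℝ),
      perspCl h x 0 ≤ (t : EReal) ↔
        ∀ s : ℝ, 0 < s → (s : EReal) * h (s⁻¹ • x) ≤ (t : EReal) := by
    intro x t
    rw [aux_perspCl_zero x (aux_antitone hbot hconv h0 x), sSup_le_iff]
    constructor
    · intro H s hs
      exact H _ (Set.mem_image_of_mem _ (Set.mem_Ioi.mpr hs))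
    · rintro H b ⟨s, hs, rfl⟩
      exact H s (Set.mem_Ioi.mp hs)
  have hmem0 : ((0 : ℝ), (0 : Fin d → ℝ)) ∈
      {p : ℝ × (Fin d → ℝ) | h p.2 ≤ (p.1 : EReal)} := by
    simp only [Set.mem_setOf_eq, h0, EReal.coe_zero, le_refl]
  constructor
  · apply Set.Subset.antisymm
    · -- closure (epiPersp h) ⊆ epiPerspCl h
      intro p hp
      obtain ⟨u, huK, hup⟩ := mem_closure_iff_seq_limit.1 hp
      have ht : Filter.Tendsto (fun n => (u n).1) Filter.atTop (nhds p.1) :=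
        (continuous_fst.tendsto p).comp hup
      have hx : Filter.Tendsto (fun n => (u n).2.1) Filter.atTop (nhds p.2.1) :=
        ((continuous_fst.comp continuous_snd).tendsto p).comp hup
      have hw : Filter.Tendsto (fun n => (u n).2.2) Filter.atTop (nhds p.2.2) :=
        ((continuous_snd.comp continuous_snd).tendsto p).comp hup
      have hw0 : ∀ n, 0 ≤ (u n).2.2 := fun n => (huK n).1
      have hpw : 0 ≤ p.2.2 := ge_of_tendsto' hw hw0
      refine ⟨hpw, ?_⟩
      rcases lt_or_eq_of_le hpw with hwpos | hweq
      · -- limit has positive weight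
        rw [perspCl, if_pos hwpos, aux_mul_le_iff hwpos]
        have hq : Filter.Tendsto
            (fun n => ((u n).2.2⁻¹ * (u n).1, (u n).2.2⁻¹ • (u n).2.1)) Filter.atTop
            (nhds (p.2.2⁻¹ * p.1, p.2.2⁻¹ • p.2.1)) :=
          ((hw.inv₀ hwpos.ne').mul ht).prodMk_nhds ((hw.inv₀ hwpos.ne').smul hx)
        have hev : ∀ᶠ n in Filter.atTop,
            ((u n).2.2⁻¹ * (u n).1, (u n).2.2⁻¹ • (u n).2.1) ∈
              {p : ℝ × (Fin d → ℝ) | h p.2 ≤ (p.1 : EReal)} := by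
          filter_upwards [hw.eventually_mem (isOpen_Ioi.mem_nhds hwpos)] with n hn
          have hn' : 0 < (u n).2.2 := Set.mem_Ioi.mp hn
          have hK2 := (huK n).2
          rw [persp, if_pos hn'] at hK2
          exact (aux_mul_le_iff hn' _).1 hK2
        exact hEc.mem_of_tendsto hq hev
      · -- limit has weight zero
        have hpz : perspCl h p.2.1 p.2.2 = perspCl h p.2.1 0 := by rw [← hweq]
        rw [hpz, hle]
        intro s hs
        rw [aux_mul_le_iff hs]
        have hq : Filter.Tendsto
            (fun n => (s⁻¹ * (u n).1, s⁻¹ • (u n).2.1)) Filter.atTop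
            (nhds (s⁻¹ * p.1, s⁻¹ • p.2.1)) :=
          (tendsto_const_nhds.mul ht).prodMk_nhds (tendsto_const_nhds.smul hx)
        have hev : ∀ᶠ n in Filter.atTop,
            (s⁻¹ * (u n).1, s⁻¹ • (u n).2.1) ∈
              {p : ℝ × (Fin d → ℝ) | h p.2 ≤ (p.1 : EReal)} := by
          have hlt : ∀ᶠ n in Filter.atTop, (u n).2.2 < s :=
            hw.eventually_mem (isOpen_Iio.mem_nhds (by rw [← hweq]; exact hs))
          filter_upwards [hlt] with n hn
          rcases lt_or_eq_of_le (hw0 n) with hpos | heq0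
          · -- positive weight approximant: convex combination with the origin
            have hK2 := (huK n).2
            rw [persp, if_pos hpos] at hK2
            have hmemn : ((u n).2.2⁻¹ * (u n).1, (u n).2.2⁻¹ • (u n).2.1) ∈
                {p : ℝ × (Fin d → ℝ) | h p.2 ≤ (p.1 : EReal)} :=
              (aux_mul_le_iff hpos _).1 hK2
            set a : ℝ := (u n).2.2 / s with ha
            have ha0 : 0 ≤ a := le_of_lt (div_pos hpos hs)
            have ha1 : a ≤ 1 := le_of_lt ((div_lt_one hs).mpr hn)
            have hcomb := hconv (a := a) (b := 1 - a) hmemn hmem0 ha0 (by linarith) (by ring)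
            simp only [Prod.smul_mk, smul_eq_mul, mul_zero, smul_zero, Prod.mk_add_mk,
              add_zero, Set.mem_setOf_eq] at hcomb
            have e1 : a * ((u n).2.2⁻¹ * (u n).1) = s⁻¹ * (u n).1 := by
              rw [ha]; field_simp
            have e2 : a • (u n).2.2⁻¹ • (u n).2.1 = s⁻¹ • (u n).2.1 := by
              rw [smul_smul]; congr 1; rw [ha]; field_simp
            rw [e1, e2] at hcomb
            exact hcomb
          · -- zero weight approximant
            have hK2 := (huK n).2
            rw [persp, if_neg (by rw [← heq0]; exact lt_irrefl 0)] at hK2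
            by_cases hx0 : (u n).2.1 = 0
            · rw [if_pos ⟨heq0.symm, hx0⟩] at hK2
              have htn : (0 : ℝ) ≤ (u n).1 := by exact_mod_cast hK2
              simp only [Set.mem_setOf_eq, hx0, smul_zero, h0]
              have : (0 : ℝ) ≤ s⁻¹ * (u n).1 :=
                mul_nonneg (le_of_lt (inv_pos.mpr hs)) htn
              exact_mod_cast this
            · rw [if_neg (by intro hc; exact hx0 hc.2)] at hK2
              exact absurd hK2 (by simp)
        exact hEc.mem_of_tendsto hq hev
    · -- epiPerspCl h ⊆ closure (epiPersp h)
      intro p hp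
      obtain ⟨hpw, hple⟩ := hp
      rcases lt_or_eq_of_le hpw with hwpos | hweq
      · apply subset_closure
        refine ⟨hpw, ?_⟩
        rw [persp, if_pos hwpos]
        rw [perspCl, if_pos hwpos] at hple
        exact hple
      · have hple0 : perspCl h p.2.1 0 ≤ (p.1 : EReal) := by rw [hweq]; exact hple
        have key := (hle _ _).1 hple0
        have htend : Filter.Tendsto (fun s : ℝ => (p.1, p.2.1, s))
            (nhdsWithin (0 : ℝ) (Set.Ioi 0)) (nhds (p.1, p.2.1, p.2.2)) := by
          rw [← hweq]
          exact tendsto_const_nhds.prodMk_nhds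
            (tendsto_const_nhds.prodMk_nhds (Filter.tendsto_id.mono_left nhdsWithin_le_nhds))
        refine mem_closure_of_tendsto htend ?_
        filter_upwards [self_mem_nhdsWithin] with s hs
        have hs' : (0 : ℝ) < s := Set.mem_Ioi.mp hs
        refine ⟨le_of_lt hs', ?_⟩
        rw [persp, if_pos hs']
        exact key s hs'
  · -- pointedness
    intro hline v hv hmv
    have hw0 : v.2.2 = 0 := by
      have h1 : 0 ≤ -v.2.2 := by simpa using hmv.1
      have h2 : 0 ≤ v.2.2 := hv.1
      linarith
    have h1 : perspCl h v.2.1 0 ≤ (v.1 : EReal) := by rw [← hw0]; exact hv.2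
    have h2 : perspCl h (-v.2.1) 0 ≤ ((-v.1 : ℝ) : EReal) := by
      have := hmv.2
      simp only [Prod.fst_neg, Prod.snd_neg, hw0, neg_zero, EReal.coe_neg] at this ⊢
      exact this
    have k1 := (hle _ _).1 h1
    have k2 := (hle _ _).1 h2
    by_contra hne
    apply hline
    refine ⟨0, (v.1, v.2.1), ?_, ?_⟩
    · intro hc
      apply hne
      have hc1 : v.1 = 0 := congrArg Prod.fst hc
      have hc2 : v.2.1 = 0 := congrArg Prod.snd hc
      have : v = (v.1, v.2.1, v.2.2) := rfl
      rw [this, hc1, hc2, hw0]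
      rfl
    · intro τ
      simp only [zero_add, Prod.smul_mk, smul_eq_mul, Set.mem_setOf_eq]
      rcases lt_trichotomy τ 0 with hτ | hτ | hτ
      · have hs : (0 : ℝ) < (-τ)⁻¹ := inv_pos.mpr (by linarith)
        have := (aux_mul_le_iff hs _).1 (k2 _ hs)
        rw [inv_inv] at this
        have e1 : (-τ) • (-v.2.1) = τ • v.2.1 := by
          rw [neg_smul, smul_neg, neg_neg]
        rw [e1] at this
        have e2 : -τ * -v.1 = τ * v.1 := by ring
        rw [e2] at this
        exact this
      · subst hτ
        simp only [zero_smul, h0, zero_mul, EReal.coe_zero, le_refl]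
      · have hs : (0 : ℝ) < τ⁻¹ := inv_pos.mpr hτ
        have := (aux_mul_le_iff hs _).1 (k1 _ hs)
        rw [inv_inv] at this
        exact this
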